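/- Let p be an odd prime, and let G_k(p) = ⟨x₁,…,x_{n+1}⟩ (free pro-p of rank n+1) or ⟨x₁,…,x_{n+2} ∣ x₁^{p^{s₀}}[x₁,x₂]⋯[x_{n+1},x_{n+2}] = 1⟩ with s₀ > 0, and similarly G_l(p) with parameters nt (t ≥ 1 an integer) and s₀' ≥ s₀. If s₀' = 0 then s₀ = 0 and G_k(p) is a quotient of G_l(p) whenever nt ≥ n; if s₀' > 0 and t > 2, then G_k(p) is a quotient of G_l(p). -/

import Mathlib

namespace Stmt19

/-- The commutator `[x,y] = x⁻¹y⁻¹xy` (the convention used in the paper). -/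
def pc {H : Type*} [Group H] (x y : H) : H := x⁻¹ * y⁻¹ * x * y

/-- The Demushkin relator `x₁^{p^s}[x₁,x₂]⋯[x_{m+1},x_{m+2}]` on `m + 2` generators
(written with 0-based indices). -/
def drel (p s m : ℕ) : FreeGroup (Fin (m + 2)) :=
  FreeGroup.of 0 ^ p ^ s *
    ((List.range (m / 2 + 1)).map fun j =>
      pc (FreeGroup.of (Fin.ofNat (m + 2) (2 * j : ℕ)))
         (FreeGroup.of (Fin.ofNat (m + 2) (2 * j + 1 : ℕ)))).prod

lemma surj_of_section {G H : Type*} [Group G] [Group H] (f : G →* H) (s : H →* G)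
    (h : f.comp s = MonoidHom.id H) : Function.Surjective f :=
  fun y => ⟨s y, DFunLike.congr_fun h y⟩

/-- Killing the even-indexed generators gives a surjection from the Demushkin group
onto a free group of rank `m/2 + 1 ≥ r`. -/
lemma key (p s m r : ℕ) (hr0 : 0 < r) (hr : r ≤ m / 2 + 1) :
    ∃ f : PresentedGroup {drel p s m} →* FreeGroup (Fin r), Function.Surjective f := by
  set φ : Fin (m + 2) → FreeGroup (Fin r) := fun i =>
    if i.val % 2 = 1 then FreeGroup.of ⟨min (i.val / 2) (r - 1), by omega⟩ else 1 with hφ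
  have h : ∀ x ∈ ({drel p s m} : Set (FreeGroup (Fin (m + 2)))), FreeGroup.lift φ x = 1 := by
    intro x hx
    rw [Set.mem_singleton_iff] at hx
    subst hx
    rw [drel, map_mul, map_pow, FreeGroup.lift_apply_of]
    have h0 : φ 0 = 1 := by simp [hφ]
    rw [h0, one_pow, one_mul, map_list_prod, List.map_map]
    apply List.prod_eq_one
    intro y hy
    simp only [List.mem_map, List.mem_range] at hy
    obtain ⟨j, hj, rfl⟩ := hy
    have hval : (Fin.ofNat (m + 2) (2 * j : ℕ)).val = 2 * j := by
      rw [Fin.val_ofNat]; apply Nat.mod_eq_of_lt; omega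
    have ha : φ (Fin.ofNat (m + 2) (2 * j : ℕ)) = 1 := by
      rw [hφ]; simp only [hval]; simp [Nat.mul_mod_right]
    simp only [Function.comp_apply, pc, map_mul, map_inv, FreeGroup.lift_apply_of, ha]
    group
  refine ⟨PresentedGroup.toGroup h, ?_⟩
  refine surj_of_section _ (FreeGroup.lift fun y : Fin r =>
    (PresentedGroup.of ⟨2 * y.val + 1, by omega⟩ : PresentedGroup {drel p s m})) ?_
  apply FreeGroup.ext_hom
  intro a
  have hlt : 2 * a.val + 1 < m + 2 := by omega
  simp only [MonoidHom.comp_apply, FreeGroup.lift_apply_of, MonoidHom.id_apply]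
  rw [PresentedGroup.toGroup.of, hφ]
  have h1 : (2 * a.val + 1) % 2 = 1 := by omega
  simp only [h1, if_pos rfl]
  refine congrArg FreeGroup.of (Fin.ext ?_)
  have := a.isLt
  simp only [Fin.val_mk]
  omega

theorem stmt_19 (p n t s₀ s₀' : ℕ) (hp : p.Prime) (hodd : Odd p) (hn : 1 ≤ n)
    (ht : 1 ≤ t) (hle : s₀ ≤ s₀') :
    (s₀' = 0 → s₀ = 0 ∧
      (n ≤ n * t →
        ∃ f : FreeGroup (Fin (n * t + 1)) →* FreeGroup (Fin (n + 1)),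
          Function.Surjective f)) ∧
    (0 < s₀' → Even (n * t) → 2 < t →
      ((s₀ = 0 →
          ∃ f : PresentedGroup {drel p s₀' (n * t)} →* FreeGroup (Fin (n + 1)),
            Function.Surjective f) ∧
       (0 < s₀ →
          ∃ f : PresentedGroup {drel p s₀' (n * t)} →* PresentedGroup {drel p s₀ n},
            Function.Surjective f))) := by
  constructor
  · intro h0
    refine ⟨by omega, ?_⟩
    intro hle'
    refine ⟨FreeGroup.lift fun i : Fin (n * t + 1) =>
      FreeGroup.of (⟨min i.val n, by omega⟩ : Fin (n + 1)), ?_⟩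
    refine surj_of_section _ (FreeGroup.lift fun y : Fin (n + 1) =>
      (FreeGroup.of (⟨y.val, by omega⟩ : Fin (n * t + 1)))) ?_
    apply FreeGroup.ext_hom
    intro a
    simp only [MonoidHom.comp_apply, FreeGroup.lift_apply_of, MonoidHom.id_apply]
    refine congrArg FreeGroup.of (Fin.ext ?_)
    have := a.isLt
    simp only [Fin.val_mk]
    omega
  · intro _ heven ht'
    have h3 : 3 * n ≤ n * t := by
      calc 3 * n = n * 3 := by ring
      _ ≤ n * t := Nat.mul_le_mul_left n (by omega)
    obtain ⟨k, hk⟩ := heven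
    constructor
    · intro _
      exact key p s₀' (n * t) (n + 1) (by omega) (by omega)
    · intro _
      obtain ⟨f, hf⟩ := key p s₀' (n * t) (n + 2) (by omega) (by omega)
      exact ⟨(PresentedGroup.mk {drel p s₀ n}).comp f,
        (PresentedGroup.mk_surjective _).comp hf⟩

end Stmt19
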